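/- arXiv:1905.03067 — 2 statements merged into one kernel-verified Lean document; each statement's English description precedes it below -/
import Mathlib

section
/- Let L be a unimodular q-lattice and let L₁, L₂ ⊆ L be R-submodules such that: the quotient modules L/L₁ and L/L₂ are free R-modules; the restriction of B_K to K·L₁ is nondegenerate and the restriction of B_K to K·L₂ is nondegenerate; L₂ = {x ∈ L : B(v,x) = 0 for all v ∈ L₁}; and L₁ = {x ∈ L : B(x,v) = 0 for all v ∈ L₂}. Then the quotient R-modules L₁^∨/L₁ and ^∨L₂/L₂ are isomorphic (both are isomorphic to L/(L₁ ⊕ L₂)). -/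
open LaurentPolynomial

instance : IsDomain (LaurentPolynomial ℤ) := NoZeroDivisors.to_isDomain _

section Sigma

variable (σ : LaurentPolynomial ℤ →+* LaurentPolynomial ℤ) (hσ : σ (T 1) = T (-1))

lemma sigma_T_negone (hσ : σ (T 1) = T (-1)) : σ (T (-1)) = T 1 := by
  have h1 : (T 1 : LaurentPolynomial ℤ) * T (-1) = 1 := by
    rw [← T_add]; simp [T_zero]
  have h2 := congrArg σ h1
  rw [map_mul, map_one, hσ] at h2
  -- h2 : T (-1) * σ (T (-1)) = 1
  have h3 : (T (-1) : LaurentPolynomial ℤ) * T 1 = 1 := by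
    rw [← T_add]; simp [T_zero]
  calc σ (T (-1)) = (T (-1) * T 1) * σ (T (-1)) := by rw [h3, one_mul]
    _ = T 1 * (T (-1) * σ (T (-1))) := by ring
    _ = T 1 := by rw [h2, mul_one]

lemma sigma_T (hσ : σ (T 1) = T (-1)) : ∀ n : ℤ, σ (T n) = T (-n) := by
  intro n
  induction n using Int.induction_on with
  | zero => simp [T_zero, map_one]
  | succ n ih => rw [show ((n:ℤ)+1) = n + 1 by ring, T_add, map_mul, ih, hσ, ← T_add]; ring_nf
  | pred n ih => rw [show (-(n:ℤ)-1) = -n + (-1) by ring, T_add, map_mul, ih, sigma_T_negone σ hσ, ← T_add]; ring_nf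

lemma sigma_invol (hσ : σ (T 1) = T (-1)) : ∀ p, σ (σ p) = p := by
  have : σ.comp σ = RingHom.id _ := by
    apply AddMonoidAlgebra.ringHom_ext
    · intro b
      have : (AddMonoidAlgebra.single (0:ℤ) (b:ℤ) : LaurentPolynomial ℤ) = (b : LaurentPolynomial ℤ) := by
        simp [LaurentPolynomial.C]
      rw [this]
      simp
    · intro a
      have hT : (AddMonoidAlgebra.single (a:ℤ) (1:ℤ) : LaurentPolynomial ℤ) = T a := rfl
      rw [hT, RingHom.comp_apply, sigma_T σ hσ, sigma_T σ hσ, RingHom.id_apply, neg_neg]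
  intro p
  exact DFunLike.congr_fun this p

end Sigma

section Helpers

variable {K : Type} [Field K] {Vs : Type} [AddCommGroup Vs] [Module K Vs]
variable (σK : K →+* K) (BK : Vs → Vs → K)

lemma BK_zero_left (hBsmull : ∀ c x y, BK (c • x) y = σK c * BK x y) (y : Vs) :
    BK 0 y = 0 := by
  have := hBsmull 0 0 y
  simpa using this

lemma BK_zero_right (hBsmulr : ∀ (c : K) x y, BK x (c • y) = c * BK x y) (x : Vs) :
    BK x 0 = 0 := by
  have := hBsmulr 0 x 0
  simpa using this

lemma BK_sub_right (hBaddr : ∀ x y y', BK x (y + y') = BK x y + BK x y')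
    (hBsmulr : ∀ (c : K) x y, BK x (c • y) = c * BK x y) (x y y' : Vs) :
    BK x (y - y') = BK x y - BK x y' := by
  have h1 : y - y' = y + (-1 : K) • y' := by
    rw [neg_one_smul]; abel
  rw [h1, hBaddr, hBsmulr]
  ring

lemma BK_sum_left (hBaddl : ∀ x x' y, BK (x + x') y = BK x y + BK x' y)
    (hBsmull : ∀ c x y, BK (c • x) y = σK c * BK x y)
    {α : Type} (s : Finset α) (c : α → K) (v : α → Vs) (y : Vs) :
    BK (∑ i ∈ s, c i • v i) y = ∑ i ∈ s, σK (c i) * BK (v i) y := by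
  classical
  induction s using Finset.induction_on with
  | empty => simpa using BK_zero_left σK BK hBsmull y
  | insert _ _ hni ih =>
    rw [Finset.sum_insert hni, Finset.sum_insert hni, hBaddl, hBsmull, ih]

lemma BK_sum_right (hBaddr : ∀ x y y', BK x (y + y') = BK x y + BK x y')
    (hBsmulr : ∀ (c : K) x y, BK x (c • y) = c * BK x y)
    {α : Type} (s : Finset α) (c : α → K) (v : α → Vs) (x : Vs) :
    BK x (∑ i ∈ s, c i • v i) = ∑ i ∈ s, c i * BK x (v i) := by
  classical
  induction s using Finset.induction_on with
  | empty => simpa using BK_zero_right BK hBsmulr x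
  | insert _ _ hni ih =>
    rw [Finset.sum_insert hni, Finset.sum_insert hni, hBaddr, hBsmulr, ih]

end Helpers

section Key

variable {R K : Type} [CommRing R] [IsDomain R] [Field K] [Algebra R K] [IsFractionRing R K]
variable {Vs : Type} [AddCommGroup Vs] [Module K Vs] [Module R Vs] [IsScalarTower R K Vs]

set_option maxHeartbeats 1000000 in
/-- The main gluing lemma: the right dual of `L₁` is `p₁ L`, and the glue quotient is
isomorphic to `L/(L₁ ⊔ L₂)`. -/
theorem key (σK : K →+* K) (hinv : ∀ x : K, σK (σK x) = x)
    (hσR : ∀ r : R, ∃ s : R, σK (algebraMap R K r) = algebraMap R K s)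
    (BK : Vs → Vs → K)
    (hBaddl : ∀ x x' y, BK (x + x') y = BK x y + BK x' y)
    (hBaddr : ∀ x y y', BK x (y + y') = BK x y + BK x y')
    (hBsmull : ∀ c x y, BK (c • x) y = σK c * BK x y)
    (hBsmulr : ∀ (c : K) x y, BK x (c • y) = c * BK x y)
    {ι : Type} [Fintype ι] (b : Module.Basis ι K Vs)
    (L : Submodule R Vs) (hL : L = Submodule.span R (Set.range b))
    (hRval : ∀ x ∈ L, ∀ y ∈ L, BK x y ∈ Set.range (algebraMap R K))
    (hLuni : ∀ x, x ∈ Submodule.span K (L : Set Vs) →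
      (∀ v ∈ L, BK x v ∈ Set.range (algebraMap R K)) → x ∈ L)
    (L₁ L₂ : Submodule R Vs) (h₁L : L₁ ≤ L) (h₂L : L₂ ≤ L)
    (hfree₂ : Module.Free R (↥L ⧸ (L₂.comap L.subtype)))
    (hnd₁ : ∀ x ∈ Submodule.span K (L₁ : Set Vs),
      (∀ y ∈ Submodule.span K (L₁ : Set Vs), BK x y = 0) → x = 0)
    (hnd₂ : ∀ x ∈ Submodule.span K (L₂ : Set Vs),
      (∀ y ∈ Submodule.span K (L₂ : Set Vs), BK x y = 0) → x = 0)
    (hOrth₂ : (L₂ : Set Vs) = {x | x ∈ L ∧ ∀ v ∈ L₁, BK v x = 0})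
    (hOrth₁ : (L₁ : Set Vs) = {x | x ∈ L ∧ ∀ v ∈ L₂, BK x v = 0}) :
    ∃ D₁ : Submodule R Vs,
      (D₁ : Set Vs) = {x | x ∈ Submodule.span K (L₁ : Set Vs) ∧
          ∀ v ∈ L₁, BK v x ∈ Set.range (algebraMap R K)} ∧
      Nonempty ((↥D₁ ⧸ (L₁.comap D₁.subtype)) ≃ₗ[R]
        (↥L ⧸ ((L₁ ⊔ L₂).comap L.subtype))) := by
  classical
  set Rr : Subring K := (algebraMap R K).range with hRr
  have hmem : ∀ z : K, z ∈ Set.range (algebraMap R K) ↔ z ∈ Rr := fun z => Iff.rfl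
  set U₁ : Submodule K Vs := Submodule.span K (L₁ : Set Vs) with hU₁
  set U₂ : Submodule K Vs := Submodule.span K (L₂ : Set Vs) with hU₂
  have h₁U : ∀ x ∈ L₁, x ∈ U₁ := fun x hx => Submodule.subset_span hx
  have h₂U : ∀ x ∈ L₂, x ∈ U₂ := fun x hx => Submodule.subset_span hx
  -- base orthogonality
  have hbase : ∀ x ∈ L₁, ∀ y ∈ L₂, BK x y = 0 := by
    intro x hx y hy
    have hx' : x ∈ (L₁ : Set Vs) := hx
    rw [hOrth₁] at hx'
    exact hx'.2 y hy
  -- orthogonality on spans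
  have horth : ∀ x ∈ U₁, ∀ y ∈ U₂, BK x y = 0 := by
    have h1 : ∀ x ∈ L₁, ∀ y ∈ U₂, BK x y = 0 := by
      intro x hx y hy
      induction hy using Submodule.span_induction with
      | mem y hy' => exact hbase x hx y hy'
      | zero => exact BK_zero_right BK hBsmulr x
      | add u w _ _ ihu ihw => rw [hBaddr, ihu, ihw, add_zero]
      | smul c u _ ihu => rw [hBsmulr, ihu, mul_zero]
    intro x hx
    induction hx using Submodule.span_induction with
    | mem x hx' => exact h1 x hx'
    | zero => exact fun y _ => BK_zero_left σK BK hBsmull y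
    | add u w _ _ ihu ihw => intro y hy; rw [hBaddl, ihu y hy, ihw y hy, add_zero]
    | smul c u _ ihu => intro y hy; rw [hBsmull, ihu y hy, mul_zero]
  -- disjointness
  have hdisj : Disjoint U₁ U₂ := by
    rw [Submodule.disjoint_def]
    intro x hx1 hx2
    exact hnd₂ x hx2 (fun y hy => horth x hx1 y hy)
  haveI : FiniteDimensional K Vs := Module.Finite.of_basis b
  -- lattice points of U₂ inside L are in L₂
  have hLU₂L₂ : ∀ x, x ∈ L → x ∈ U₂ → x ∈ L₂ := by
    intro x hxL hxU₂
    have : x ∈ {x | x ∈ L ∧ ∀ v ∈ L₁, BK v x = 0} :=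
      ⟨hxL, fun v hv => horth v (h₁U v hv) x hxU₂⟩
    rw [← hOrth₂] at this
    exact this
  -- every vector right-orthogonal to U₁ lies in U₂
  have hWsub : ∀ x : Vs, (∀ v ∈ U₁, BK v x = 0) → x ∈ U₂ := by
    intro x hx
    obtain ⟨r, hr⟩ := IsLocalization.exist_integer_multiples
      (nonZeroDivisors R) Finset.univ (fun i => b.repr x i)
    have hrx : ((r : R) • x) ∈ L := by
      rw [hL, Module.Basis.mem_span_iff_repr_mem]
      intro i
      have h2 : b.repr ((r : R) • x) i = (r : R) • (b.repr x i) := by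
        rw [← algebraMap_smul K (r : R) x, map_smul]
        simp [Algebra.smul_def]
      rw [h2]
      obtain ⟨s, hs⟩ := hr i (Finset.mem_univ i)
      exact ⟨s, hs⟩
    have hrx2 : ((r : R) • x) ∈ L₂ := by
      have h3 : ((r : R) • x) ∈ {x | x ∈ L ∧ ∀ v ∈ L₁, BK v x = 0} := by
        refine ⟨hrx, fun v hv => ?_⟩
        rw [← algebraMap_smul K (r : R) x, hBsmulr, hx v (h₁U v hv), mul_zero]
      rw [← hOrth₂] at h3
      exact h3
    have hne : algebraMap R K (r : R) ≠ 0 :=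
      IsFractionRing.to_map_ne_zero_of_mem_nonZeroDivisors r.2
    have hxeq : x = (algebraMap R K (r : R))⁻¹ • ((r : R) • x) := by
      rw [← algebraMap_smul K (r : R) x, smul_smul, inv_mul_cancel₀ hne, one_smul]
    rw [hxeq]
    exact Submodule.smul_mem _ _ (h₂U _ hrx2)
  -- the kernel of the "pairing with U₁" map is U₂
  set m := Module.finrank K ↥U₁ with hm
  set t : Module.Basis (Fin m) K ↥U₁ := Module.finBasis K ↥U₁ with ht
  set Φ : Vs →ₗ[K] (Fin m → K) := LinearMap.pi (fun i =>
    { toFun := fun x => BK ((t i : Vs)) x,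
      map_add' := fun a c => hBaddr _ a c,
      map_smul' := fun cc a => by simp [hBsmulr] }) with hΦ
  have hΦapp : ∀ x i, Φ x i = BK ((t i : Vs)) x := fun x i => rfl
  have hkerΦ : LinearMap.ker Φ = U₂ := by
    ext x
    simp only [LinearMap.mem_ker]
    constructor
    · intro h
      apply hWsub
      intro v hv
      have hvrep : (⟨v, hv⟩ : ↥U₁) = ∑ i, t.repr ⟨v, hv⟩ i • t i := (t.sum_repr _).symm
      have hvrep' : v = ∑ i, t.repr ⟨v, hv⟩ i • ((t i : Vs)) := by
        have h2 := congrArg (Submodule.subtype U₁) hvrep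
        simp only [map_sum, map_smul, Submodule.subtype_apply] at h2; exact h2
      rw [hvrep', BK_sum_left σK BK hBaddl hBsmull]
      have hzero : ∀ i, BK ((t i : Vs)) x = 0 := by
        intro i
        have h3 := congrFun h i
        simpa [hΦapp] using h3
      simp [hzero]
    · intro h
      funext i
      simp only [hΦapp, Pi.zero_apply]
      exact horth _ (t i).2 x h
  -- codisjointness by dimension count
  have hsup : U₁ ⊔ U₂ = ⊤ := by
    have h1 := LinearMap.finrank_range_add_finrank_ker Φ
    have h2 : Module.finrank K ↥(LinearMap.range Φ) ≤ m := by
      have h3 := Submodule.finrank_le (LinearMap.range Φ)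
      simpa [Module.finrank_pi] using h3
    have h4 := Submodule.finrank_sup_add_finrank_inf_eq U₁ U₂
    rw [hdisj.eq_bot, finrank_bot, add_zero] at h4
    have h5 : Module.finrank K ↥(U₁ ⊔ U₂) ≤ Module.finrank K Vs :=
      Submodule.finrank_le _
    rw [hkerΦ] at h1
    apply Submodule.eq_top_of_finrank_eq
    omega
  have hcompl : IsCompl U₁ U₂ := ⟨hdisj, codisjoint_iff.mpr hsup⟩
  -- the projection onto U₁ along U₂
  set π := Submodule.linearProjOfIsCompl U₁ U₂ hcompl with hπ
  set p₁ : Vs →ₗ[K] Vs := U₁.subtype.comp π with hp₁def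
  have hp₁U₁ : ∀ x, p₁ x ∈ U₁ := fun x => (π x).2
  have hp₁left : ∀ x, ∀ hx : x ∈ U₁, p₁ x = x := by
    intro x hx
    have h : π x = ⟨x, hx⟩ := Submodule.linearProjOfIsCompl_apply_left hcompl ⟨x, hx⟩
    rw [hp₁def]
    simp [LinearMap.comp_apply, h]
  have hp₁right : ∀ x, ∀ hx : x ∈ U₂, p₁ x = 0 := by
    intro x hx
    have h : π x = 0 := Submodule.linearProjOfIsCompl_apply_right' hcompl hx
    rw [hp₁def]
    simp [LinearMap.comp_apply, h]
  have hsubU₂ : ∀ x, x - p₁ x ∈ U₂ := by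
    intro x
    have hx : x ∈ U₁ ⊔ U₂ := by rw [hsup]; trivial
    obtain ⟨a, ha, c, hc, hac⟩ := Submodule.mem_sup.1 hx
    have h : p₁ x = a := by
      rw [← hac, map_add, hp₁left a ha, hp₁right c hc, add_zero]
    rw [h, ← hac]
    simpa using hc
  have hBright : ∀ v ∈ U₁, ∀ x, BK v (p₁ x) = BK v x := by
    intro v hv x
    have h1 : BK v (x - p₁ x) = 0 := horth v hv _ (hsubU₂ x)
    rw [BK_sub_right BK hBaddr hBsmulr] at h1
    have h2 := sub_eq_zero.1 h1
    exact h2.symm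
  -- the lattice M = p₁(L)
  set g : ↥L →ₗ[R] Vs := (p₁.restrictScalars R).comp L.subtype with hg
  have hgapp : ∀ x : ↥L, g x = p₁ ↑x := fun x => rfl
  set M : Submodule R Vs := LinearMap.range g with hM
  have hMU₁ : ∀ y ∈ M, y ∈ U₁ := by
    rintro y ⟨x, rfl⟩
    exact hp₁U₁ _
  have hL₁M : L₁ ≤ M := by
    intro x hx
    exact ⟨⟨x, h₁L hx⟩, hp₁left x (h₁U x hx)⟩
  have hkerg : LinearMap.ker g = L₂.comap L.subtype := by
    ext x
    simp only [LinearMap.mem_ker, Submodule.mem_comap, hgapp]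
    constructor
    · intro h
      have h2 : (x : Vs) - p₁ x ∈ U₂ := hsubU₂ x
      rw [h, sub_zero] at h2
      exact hLU₂L₂ _ x.2 h2
    · intro h
      exact hp₁right _ (h₂U _ h)
  haveI hLfin : Module.Finite R ↥L := by
    rw [hL]
    exact Module.Finite.span_of_finite R (Set.finite_range b)
  set equivM : (↥L ⧸ (L₂.comap L.subtype)) ≃ₗ[R] ↥M :=
    (Submodule.quotEquivOfEq _ _ hkerg.symm).trans g.quotKerEquivRange with hequivM
  haveI : Module.Finite R ↥M := Module.Finite.equiv equivM
  haveI : Module.Free R ↥M := Module.Free.of_equiv equivM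
  set eM : Module.Basis (Module.Free.ChooseBasisIndex R ↥M) R ↥M :=
    Module.Free.chooseBasis R ↥M with heM
  set e' : Module.Free.ChooseBasisIndex R ↥M → Vs := fun i => ↑(eM i) with he'
  have he'M : ∀ i, e' i ∈ M := fun i => (eM i).2
  have hspanM : Submodule.span R (Set.range e') = M := by
    have h1 := congrArg (Submodule.map M.subtype) eM.span_eq
    rw [Submodule.map_span, Submodule.map_subtype_top] at h1
    have h2 : ⇑M.subtype '' Set.range ⇑eM = Set.range e' := by
      rw [← Set.range_comp]
      rfl
    rw [h2] at h1
    exact h1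
  have hliR : LinearIndependent R e' :=
    eM.linearIndependent.map' M.subtype (Submodule.ker_subtype M)
  have hliK : LinearIndependent K e' := (LinearIndependent.iff_fractionRing R K).1 hliR
  have hspanKe' : Submodule.span K (Set.range e') = U₁ := by
    apply le_antisymm
    · rw [Submodule.span_le]
      rintro y ⟨i, rfl⟩
      exact hMU₁ _ (he'M i)
    · rw [hU₁, Submodule.span_le]
      intro x hx
      have hxM : x ∈ M := hL₁M hx
      rw [← hspanM] at hxM
      have h2 : Submodule.span R (Set.range e') ≤
          (Submodule.span K (Set.range e')).restrictScalars R := by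
        rw [Submodule.span_le]
        exact fun z hz => Submodule.subset_span hz
      exact h2 hxM
  -- Gram matrix of the basis e' of U₁
  set G : Matrix (Module.Free.ChooseBasisIndex R ↥M) (Module.Free.ChooseBasisIndex R ↥M) K :=
    Matrix.of fun i j => BK (e' i) (e' j) with hG
  have hGdet : G.det ≠ 0 := by
    intro hdet0
    have hdet0' : G.transpose.det = 0 := by rw [Matrix.det_transpose]; exact hdet0
    obtain ⟨c, hc0, hc⟩ := (Matrix.exists_mulVec_eq_zero_iff).2 hdet0'
    set x : Vs := ∑ i, σK (c i) • e' i with hx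
    have hxU₁ : x ∈ U₁ := by
      rw [← hspanKe']
      exact Submodule.sum_mem _ (fun i _ =>
        Submodule.smul_mem _ _ (Submodule.subset_span (Set.mem_range_self i)))
    have hBxe : ∀ j, BK x (e' j) = 0 := by
      intro j
      rw [hx, BK_sum_left σK BK hBaddl hBsmull]
      have h1 : ∀ i, σK (σK (c i)) * BK (e' i) (e' j) = c i * G.transpose j i := by
        intro i
        rw [hinv]
        rfl
      rw [Finset.sum_congr rfl (fun i _ => h1 i)]
      have h2 := congrFun hc j
      simpa [Matrix.mulVec, dotProduct, mul_comm] using h2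
    have hBxy : ∀ y ∈ U₁, BK x y = 0 := by
      intro y hy
      rw [← hspanKe'] at hy
      obtain ⟨d, rfl⟩ := (Submodule.mem_span_range_iff_exists_fun K).1 hy
      rw [BK_sum_right BK hBaddr hBsmulr]
      simp [hBxe]
    have hx0 : x = 0 := hnd₁ x hxU₁ hBxy
    have hall := Fintype.linearIndependent_iff.1 hliK (fun i => σK (c i)) (by rw [← hx]; exact hx0)
    apply hc0
    funext i
    have h3 := hall i
    have h4 := congrArg σK h3
    rw [hinv, map_zero] at h4
    exact h4
  have hGunit : IsUnit G.det := isUnit_iff_ne_zero.2 hGdet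
  have hGG : G * G⁻¹ = 1 := Matrix.mul_nonsing_inv G hGunit
  have hGG' : G⁻¹ * G = 1 := Matrix.nonsing_inv_mul G hGunit
  have honeR : ∀ (i k : Module.Free.ChooseBasisIndex R ↥M),
      (1 : Matrix (Module.Free.ChooseBasisIndex R ↥M) (Module.Free.ChooseBasisIndex R ↥M) K) i k ∈ Rr := by
    intro i k
    rw [Matrix.one_apply]
    split
    · exact Subring.one_mem Rr
    · exact Subring.zero_mem Rr
  -- the dual test vectors
  set xv : Module.Free.ChooseBasisIndex R ↥M → Vs :=
    fun k => ∑ i, σK (G⁻¹ k i) • e' i with hxv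
  have hxvU₁ : ∀ k, xv k ∈ U₁ := by
    intro k
    rw [← hspanKe']
    exact Submodule.sum_mem _ (fun i _ =>
      Submodule.smul_mem _ _ (Submodule.subset_span (Set.mem_range_self i)))
  have hBxve : ∀ k j, BK (xv k) (e' j)
      = (1 : Matrix (Module.Free.ChooseBasisIndex R ↥M) (Module.Free.ChooseBasisIndex R ↥M) K) k j := by
    intro k j
    rw [hxv, BK_sum_left σK BK hBaddl hBsmull]
    have h1 : ∀ i, σK (σK (G⁻¹ k i)) * BK (e' i) (e' j) = G⁻¹ k i * G i j := by
      intro i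
      rw [hinv]
      rfl
    rw [Finset.sum_congr rfl (fun i _ => h1 i), ← Matrix.mul_apply, hGG']
  have hBxvM : ∀ k, ∀ w ∈ M, BK (xv k) w ∈ Rr := by
    intro k w hw
    rw [← hspanM] at hw
    induction hw using Submodule.span_induction with
    | mem w hw' =>
      obtain ⟨j, rfl⟩ := hw'
      rw [hBxve]
      exact honeR k j
    | zero => rw [BK_zero_right BK hBsmulr]; exact Subring.zero_mem Rr
    | add u w _ _ ihu ihw => rw [hBaddr]; exact Subring.add_mem Rr ihu ihw
    | smul r u _ ihu =>
      rw [← algebraMap_smul K r u, hBsmulr]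
      exact Subring.mul_mem Rr ⟨r, rfl⟩ ihu
  have hxvL₁ : ∀ k, xv k ∈ L₁ := by
    intro k
    have hxvL : xv k ∈ L := by
      apply hLuni
      · have h1 : U₁ ≤ Submodule.span K (L : Set Vs) := by
          rw [hU₁]
          exact Submodule.span_mono h₁L
        exact h1 (hxvU₁ k)
      · intro v hv
        rw [← hBright (xv k) (hxvU₁ k) v]
        have hp₁vM : p₁ v ∈ M := ⟨⟨v, hv⟩, rfl⟩
        exact hBxvM k _ hp₁vM
    have h2 : xv k ∈ {x | x ∈ L ∧ ∀ v ∈ L₂, BK x v = 0} :=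
      ⟨hxvL, fun v hv => horth _ (hxvU₁ k) v (h₂U v hv)⟩
    rw [← hOrth₁] at h2
    exact h2
  -- D₁ = M : carrier description
  have hcarrier : (M : Set Vs) = {x | x ∈ Submodule.span K (L₁ : Set Vs) ∧
      ∀ v ∈ L₁, BK v x ∈ Set.range (algebraMap R K)} := by
    apply Set.ext
    intro y
    constructor
    · rintro ⟨x, rfl⟩
      refine ⟨hp₁U₁ x, fun v hv => ?_⟩
      rw [hgapp, hBright v (h₁U v hv) x]
      exact hRval v (h₁L hv) x x.2
    · rintro ⟨hyU₁, hyR⟩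
      have hyU₁' : y ∈ U₁ := hyU₁
      rw [← hspanKe'] at hyU₁'
      obtain ⟨d, hd⟩ := (Submodule.mem_span_range_iff_exists_fun K).1 hyU₁'
      have hdk : ∀ k, d k ∈ Rr := by
        intro k
        have h1 : BK (xv k) y ∈ Rr := hyR (xv k) (hxvL₁ k)
        have h2 : BK (xv k) y = d k := by
          rw [← hd, BK_sum_right BK hBaddr hBsmulr]
          have h3 : ∀ j, d j * BK (xv k) (e' j)
              = d j * (1 : Matrix (Module.Free.ChooseBasisIndex R ↥M)
                  (Module.Free.ChooseBasisIndex R ↥M) K) k j := by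
            intro j
            rw [hBxve]
          rw [Finset.sum_congr rfl (fun j _ => h3 j)]
          simp [Matrix.one_apply, mul_ite, Finset.sum_ite_eq]
        rw [h2] at h1
        exact h1
      rw [← hspanM]
      rw [← hd]
      apply Submodule.sum_mem
      intro j _
      obtain ⟨s, hs⟩ := hdk j
      rw [← hs, algebraMap_smul]
      exact Submodule.smul_mem _ _ (Submodule.subset_span (Set.mem_range_self j))
  -- the isomorphism
  refine ⟨M, hcarrier, ?_⟩
  set f : ↥L →ₗ[R] (↥M ⧸ (L₁.comap M.subtype)) :=
    (Submodule.mkQ (L₁.comap M.subtype)).comp g.rangeRestrict with hf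
  have hfsurj : Function.Surjective f := by
    rw [hf, LinearMap.coe_comp]
    exact (Submodule.mkQ_surjective _).comp g.surjective_rangeRestrict
  have hkerf : LinearMap.ker f = (L₁ ⊔ L₂).comap L.subtype := by
    ext x
    simp only [LinearMap.mem_ker, hf, LinearMap.comp_apply, Submodule.mem_comap]
    rw [Submodule.mkQ_apply, Submodule.Quotient.mk_eq_zero]
    constructor
    · intro h
      have h2 : M.subtype (g.rangeRestrict x) ∈ L₁ := (Submodule.mem_comap).1 h
      have hcoe' : M.subtype (g.rangeRestrict x) = p₁ (L.subtype x) := rfl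
      rw [hcoe'] at h2
      have hx2 : (L.subtype x) - p₁ (L.subtype x) ∈ L₂ := by
        apply hLU₂L₂
        · exact Submodule.sub_mem L x.2 (h₁L h2)
        · exact hsubU₂ _
      rw [Submodule.mem_sup]
      exact ⟨p₁ (L.subtype x), h2, (L.subtype x) - p₁ (L.subtype x), hx2, by abel⟩
    · intro h
      obtain ⟨a, ha, c, hc, hac⟩ := Submodule.mem_sup.1 h
      have hp : p₁ (L.subtype x) = a := by
        rw [← hac, map_add, hp₁left a (h₁U a ha), hp₁right c (h₂U c hc), add_zero]
      have hcoe' : M.subtype (g.rangeRestrict x) = p₁ (L.subtype x) := rfl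
      rw [Submodule.mem_comap, hcoe', hp]
      exact ha
  exact ⟨((Submodule.quotEquivOfEq _ _ hkerf.symm).trans
      (f.quotKerEquivOfSurjective hfsurj)).symm⟩

end Key

section LeftUni

variable {R K : Type} [CommRing R] [IsDomain R] [Field K] [Algebra R K] [IsFractionRing R K]
variable {Vs : Type} [AddCommGroup Vs] [Module K Vs] [Module R Vs] [IsScalarTower R K Vs]

/-- Step F: a right-unimodular lattice is also left-unimodular. -/
theorem leftUni (σK : K →+* K)
    (hσR : ∀ r : R, ∃ s : R, σK (algebraMap R K r) = algebraMap R K s)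
    (hσR' : ∀ r : R, ∃ s : R, algebraMap R K r = σK (algebraMap R K s))
    (BK : Vs → Vs → K)
    (hBaddl : ∀ x x' y, BK (x + x') y = BK x y + BK x' y)
    (hBaddr : ∀ x y y', BK x (y + y') = BK x y + BK x y')
    (hBsmull : ∀ c x y, BK (c • x) y = σK c * BK x y)
    (hBsmulr : ∀ (c : K) x y, BK x (c • y) = c * BK x y)
    {ι : Type} [Fintype ι] [DecidableEq ι] (b : Module.Basis ι K Vs)
    (hnd : (Matrix.of fun i j => BK (b i) (b j)).det ≠ 0)
    (L : Submodule R Vs) (hL : L = Submodule.span R (Set.range b))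
    (huni : ∀ x, x ∈ Submodule.span K (L : Set Vs) →
      (∀ v ∈ L, BK v x ∈ Set.range (algebraMap R K)) → x ∈ L) :
    ∀ x, x ∈ Submodule.span K (L : Set Vs) →
      (∀ v ∈ L, BK x v ∈ Set.range (algebraMap R K)) → x ∈ L := by
  classical
  set Rr : Subring K := (algebraMap R K).range with hRr
  have hmem : ∀ z : K, z ∈ Set.range (algebraMap R K) ↔ z ∈ Rr := fun z => Iff.rfl
  set H : Matrix ι ι K := Matrix.of fun i j => BK (b i) (b j) with hH
  have hHunit : IsUnit H.det := isUnit_iff_ne_zero.2 hnd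
  have hHH : H * H⁻¹ = 1 := Matrix.mul_nonsing_inv H hHunit
  have hHH' : H⁻¹ * H = 1 := Matrix.nonsing_inv_mul H hHunit
  have hbL : ∀ i, b i ∈ L := by
    intro i; rw [hL]; exact Submodule.subset_span (Set.mem_range_self i)
  have hspanKtop : Submodule.span K (L : Set Vs) = ⊤ := by
    apply eq_top_iff.2
    rw [← b.span_eq]
    exact Submodule.span_le.2 (fun y hy => Submodule.subset_span (by
      obtain ⟨i, rfl⟩ := hy; exact hbL i))
  -- the columns of H⁻¹ give elements of L
  set xv : ι → Vs := fun k => ∑ j, H⁻¹ j k • b j with hxv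
  have hBbxv : ∀ i k, BK (b i) (xv k) = (1 : Matrix ι ι K) i k := by
    intro i k
    rw [hxv]
    rw [BK_sum_right BK hBaddr hBsmulr]
    rw [← hHH, Matrix.mul_apply]
    exact Finset.sum_congr rfl (fun j _ => by rw [mul_comm]; rfl)
  have honeR : ∀ (i k : ι), (1 : Matrix ι ι K) i k ∈ Rr := by
    intro i k
    rw [Matrix.one_apply]
    split
    · exact Subring.one_mem Rr
    · exact Subring.zero_mem Rr
  have hxvL : ∀ k, xv k ∈ L := by
    intro k
    apply huni _ (by rw [hspanKtop]; trivial)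
    intro v hv
    rw [hL] at hv
    rw [hmem]
    induction hv using Submodule.span_induction with
    | mem v hv' =>
      obtain ⟨i, rfl⟩ := hv'
      rw [hBbxv]
      exact honeR i k
    | zero => rw [BK_zero_left σK BK hBsmull]; exact Subring.zero_mem Rr
    | add v w _ _ ihv ihw => rw [hBaddl]; exact Subring.add_mem Rr ihv ihw
    | smul r v _ ihv =>
      rw [← algebraMap_smul K r v, hBsmull]
      obtain ⟨s, hs⟩ := hσR r
      rw [hs]
      exact Subring.mul_mem Rr ⟨s, rfl⟩ ihv
  have hrepr_xv : ∀ k j, b.repr (xv k) j = H⁻¹ j k := by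
    intro k j
    rw [hxv]
    simp [Finsupp.single_apply, Finset.sum_ite_eq]
  have hHinvR : ∀ j k, H⁻¹ j k ∈ Rr := by
    intro j k
    have := hxvL k
    rw [hL, Module.Basis.mem_span_iff_repr_mem] at this
    have h2 := this j
    rw [hrepr_xv k j] at h2
    exact h2
  -- main argument
  intro x _ hx
  have hrow : ∀ j, BK x (b j) ∈ Rr := fun j => hx (b j) (hbL j)
  set c : ι → K := fun i => b.repr x i with hc
  have hxc : x = ∑ i, c i • b i := (b.sum_repr x).symm
  have hBxb : ∀ j, BK x (b j) = ∑ i, σK (c i) * H i j := by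
    intro j
    conv_lhs => rw [hxc]
    rw [BK_sum_left σK BK hBaddl hBsmull]
    rfl
  have hkey : ∀ k, σK (c k) = ∑ j, BK x (b j) * H⁻¹ j k := by
    intro k
    have : ∑ j, BK x (b j) * H⁻¹ j k = ∑ j, (∑ i, σK (c i) * H i j) * H⁻¹ j k := by
      exact Finset.sum_congr rfl (fun j _ => by rw [hBxb])
    rw [this]
    have : ∑ j, (∑ i, σK (c i) * H i j) * H⁻¹ j k
        = ∑ i, σK (c i) * (∑ j, H i j * H⁻¹ j k) := by
      simp_rw [Finset.sum_mul, Finset.mul_sum]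
      rw [Finset.sum_comm]
      exact Finset.sum_congr rfl (fun i _ => Finset.sum_congr rfl (fun j _ => by ring))
    rw [this]
    have h1 : ∀ i, (∑ j, H i j * H⁻¹ j k) = (1 : Matrix ι ι K) i k := by
      intro i; rw [← Matrix.mul_apply, hHH]
    simp_rw [h1]
    simp [Matrix.one_apply, Finset.sum_ite_eq]
  have hcR : ∀ k, c k ∈ Set.range (algebraMap R K) := by
    intro k
    have h1 : σK (c k) ∈ Rr := by
      rw [hkey k]
      exact Subring.sum_mem Rr (fun j _ => Subring.mul_mem Rr (hrow j) (hHinvR j k))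
    obtain ⟨s, hs⟩ := h1
    obtain ⟨s', hs'⟩ := hσR' s
    refine ⟨s', ?_⟩
    apply σK.injective
    rw [← hs', hs]
  rw [hL, Module.Basis.mem_span_iff_repr_mem]
  exact hcR

end LeftUni


open LaurentPolynomial

set_option maxHeartbeats 2000000 in
set_option synthInstance.maxHeartbeats 200000 in

/-- q-lattice gluing, part 2: glue groups.  With `L`, `L₁`, `L₂` as in
the gluing setup (L unimodular, free quotients, nondegenerate restrictions, mutual
one-sided orthogonal complements), the right dual `L₁^∨` and the left dual `^∨L₂` are
`R`-submodules of `L_K`, and the quotient `R`-modules `L₁^∨/L₁` and `^∨L₂/L₂` are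
isomorphic (both being isomorphic to `L/(L₁ ⊕ L₂)`). -/
theorem stmt6
    (σ : LaurentPolynomial ℤ →+* LaurentPolynomial ℤ)
    (hσ : σ (T 1) = T (-1))
    (σK : FractionRing (LaurentPolynomial ℤ) →+* FractionRing (LaurentPolynomial ℤ))
    (hσK : ∀ r : LaurentPolynomial ℤ,
      σK (algebraMap (LaurentPolynomial ℤ) (FractionRing (LaurentPolynomial ℤ)) r)
        = algebraMap (LaurentPolynomial ℤ) (FractionRing (LaurentPolynomial ℤ)) (σ r))
    (Vs : Type) [AddCommGroup Vs] [Module (FractionRing (LaurentPolynomial ℤ)) Vs]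
    [Module (LaurentPolynomial ℤ) Vs]
    [IsScalarTower (LaurentPolynomial ℤ) (FractionRing (LaurentPolynomial ℤ)) Vs]
    (BK : Vs → Vs → FractionRing (LaurentPolynomial ℤ))
    (hBaddl : ∀ x x' y, BK (x + x') y = BK x y + BK x' y)
    (hBaddr : ∀ x y y', BK x (y + y') = BK x y + BK x y')
    (hBsmull : ∀ (c : FractionRing (LaurentPolynomial ℤ)) (x y),
      BK (c • x) y = σK c * BK x y)
    (hBsmulr : ∀ (c : FractionRing (LaurentPolynomial ℤ)) (x y),
      BK x (c • y) = c * BK x y)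
    (ι : Type) [Fintype ι] [DecidableEq ι]
    (b : Module.Basis ι (FractionRing (LaurentPolynomial ℤ)) Vs)
    (hnd : (Matrix.of fun i j => BK (b i) (b j)).det ≠ 0)
    (L : Submodule (LaurentPolynomial ℤ) Vs)
    (hL : L = Submodule.span (LaurentPolynomial ℤ) (Set.range b))
    (hRval : ∀ x ∈ L, ∀ y ∈ L, BK x y ∈
      Set.range (algebraMap (LaurentPolynomial ℤ) (FractionRing (LaurentPolynomial ℤ))))
    -- unimodularity: L equals its right dual
    (huni : {x : Vs |
        x ∈ Submodule.span (FractionRing (LaurentPolynomial ℤ)) (L : Set Vs) ∧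
        ∀ v ∈ L, BK v x ∈ Set.range
          (algebraMap (LaurentPolynomial ℤ) (FractionRing (LaurentPolynomial ℤ)))}
      = (L : Set Vs))
    (L₁ L₂ : Submodule (LaurentPolynomial ℤ) Vs) (h₁L : L₁ ≤ L) (h₂L : L₂ ≤ L)
    -- the quotients L/L₁ and L/L₂ are free R-modules
    (hfree₁ : Module.Free (LaurentPolynomial ℤ)
      (↥L ⧸ (L₁.comap L.subtype)))
    (hfree₂ : Module.Free (LaurentPolynomial ℤ)
      (↥L ⧸ (L₂.comap L.subtype)))
    -- the restriction of B_K to K·L₁ is nondegenerate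
    (hnd₁l : ∀ x ∈ Submodule.span (FractionRing (LaurentPolynomial ℤ)) (L₁ : Set Vs),
      (∀ y ∈ Submodule.span (FractionRing (LaurentPolynomial ℤ)) (L₁ : Set Vs),
        BK x y = 0) → x = 0)
    (hnd₁r : ∀ y ∈ Submodule.span (FractionRing (LaurentPolynomial ℤ)) (L₁ : Set Vs),
      (∀ x ∈ Submodule.span (FractionRing (LaurentPolynomial ℤ)) (L₁ : Set Vs),
        BK x y = 0) → y = 0)
    -- the restriction of B_K to K·L₂ is nondegenerate
    (hnd₂l : ∀ x ∈ Submodule.span (FractionRing (LaurentPolynomial ℤ)) (L₂ : Set Vs),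
      (∀ y ∈ Submodule.span (FractionRing (LaurentPolynomial ℤ)) (L₂ : Set Vs),
        BK x y = 0) → x = 0)
    (hnd₂r : ∀ y ∈ Submodule.span (FractionRing (LaurentPolynomial ℤ)) (L₂ : Set Vs),
      (∀ x ∈ Submodule.span (FractionRing (LaurentPolynomial ℤ)) (L₂ : Set Vs),
        BK x y = 0) → y = 0)
    -- L₂ is the right orthogonal complement of L₁ in L
    (hOrth₂ : (L₂ : Set Vs) = {x : Vs | x ∈ L ∧ ∀ v ∈ L₁, BK v x = 0})
    -- L₁ is the left orthogonal complement of L₂ in L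
    (hOrth₁ : (L₁ : Set Vs) = {x : Vs | x ∈ L ∧ ∀ v ∈ L₂, BK x v = 0}) :
    ∃ (D₁ D₂ : Submodule (LaurentPolynomial ℤ) Vs),
      -- D₁ is the right dual L₁^∨
      (D₁ : Set Vs) = {x : Vs |
          x ∈ Submodule.span (FractionRing (LaurentPolynomial ℤ)) (L₁ : Set Vs) ∧
          ∀ v ∈ L₁, BK v x ∈ Set.range
            (algebraMap (LaurentPolynomial ℤ) (FractionRing (LaurentPolynomial ℤ)))} ∧
      -- D₂ is the left dual ^∨L₂
      (D₂ : Set Vs) = {x : Vs |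
          x ∈ Submodule.span (FractionRing (LaurentPolynomial ℤ)) (L₂ : Set Vs) ∧
          ∀ v ∈ L₂, BK x v ∈ Set.range
            (algebraMap (LaurentPolynomial ℤ) (FractionRing (LaurentPolynomial ℤ)))} ∧
      -- L₁^∨/L₁ ≅ ^∨L₂/L₂ ...
      Nonempty ((↥D₁ ⧸ (L₁.comap D₁.subtype)) ≃ₗ[LaurentPolynomial ℤ]
        (↥D₂ ⧸ (L₂.comap D₂.subtype))) ∧
      -- ... both being isomorphic to L/(L₁ ⊕ L₂)
      Nonempty ((↥D₁ ⧸ (L₁.comap D₁.subtype)) ≃ₗ[LaurentPolynomial ℤ]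
        (↥L ⧸ ((L₁ ⊔ L₂).comap L.subtype))) := by
  classical
  have hinv : ∀ x, σK (σK x) = x := by
    have hcomp : σK.comp σK = RingHom.id _ := by
      apply IsLocalization.ringHom_ext (nonZeroDivisors (LaurentPolynomial ℤ))
      refine RingHom.ext fun r => ?_
      simp only [RingHom.comp_apply, RingHom.id_apply]
      rw [hσK, hσK, sigma_invol σ hσ]
    intro x
    exact DFunLike.congr_fun hcomp x
  have hσR : ∀ r : LaurentPolynomial ℤ, ∃ s : LaurentPolynomial ℤ,
      σK (algebraMap _ (FractionRing (LaurentPolynomial ℤ)) r) = algebraMap _ _ s :=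
    fun r => ⟨σ r, hσK r⟩
  have hσR' : ∀ r : LaurentPolynomial ℤ, ∃ s : LaurentPolynomial ℤ,
      algebraMap _ (FractionRing (LaurentPolynomial ℤ)) r = σK (algebraMap _ _ s) := by
    intro r
    refine ⟨σ r, ?_⟩
    rw [hσK, sigma_invol σ hσ]
  have hRmem : ∀ a : FractionRing (LaurentPolynomial ℤ),
      σK a ∈ Set.range (algebraMap (LaurentPolynomial ℤ) (FractionRing (LaurentPolynomial ℤ))) ↔
      a ∈ Set.range (algebraMap (LaurentPolynomial ℤ) (FractionRing (LaurentPolynomial ℤ))) := by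
    intro a
    constructor
    · rintro ⟨s, hs⟩
      refine ⟨σ s, ?_⟩
      rw [← hσK, hs, hinv]
    · rintro ⟨s, rfl⟩
      exact ⟨σ s, (hσK s).symm⟩
  have hzero : ∀ a : FractionRing (LaurentPolynomial ℤ), σK a = 0 ↔ a = 0 := by
    intro a
    constructor
    · intro h
      apply σK.injective
      rw [h, map_zero]
    · rintro rfl
      exact map_zero σK
  have huni' : ∀ x, x ∈ Submodule.span (FractionRing (LaurentPolynomial ℤ)) (L : Set Vs) →
      (∀ v ∈ L, BK v x ∈ Set.range
        (algebraMap (LaurentPolynomial ℤ) (FractionRing (LaurentPolynomial ℤ)))) → x ∈ L := by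
    intro x h1 h2
    have h3 : x ∈ {x : Vs |
        x ∈ Submodule.span (FractionRing (LaurentPolynomial ℤ)) (L : Set Vs) ∧
        ∀ v ∈ L, BK v x ∈ Set.range
          (algebraMap (LaurentPolynomial ℤ) (FractionRing (LaurentPolynomial ℤ)))} := ⟨h1, h2⟩
    rw [huni] at h3
    exact h3
  have hLuni := leftUni σK hσR hσR' BK hBaddl hBaddr hBsmull hBsmulr b hnd L hL huni'
  obtain ⟨D₁, hD₁, hiso₁⟩ := key σK hinv hσR BK hBaddl hBaddr hBsmull hBsmulr b L hL hRval
    hLuni L₁ L₂ h₁L h₂L hfree₂ hnd₁l hnd₂l hOrth₂ hOrth₁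
  -- the flipped form
  set BK' : Vs → Vs → FractionRing (LaurentPolynomial ℤ) := fun x y => σK (BK y x) with hBK'
  have hBaddl' : ∀ x x' y, BK' (x + x') y = BK' x y + BK' x' y := by
    intro x x' y
    show σK (BK y (x + x')) = σK (BK y x) + σK (BK y x')
    rw [hBaddr]
    exact RingHom.map_add σK _ _
  have hBaddr' : ∀ x y y', BK' x (y + y') = BK' x y + BK' x y' := by
    intro x y y'
    show σK (BK (y + y') x) = σK (BK y x) + σK (BK y' x)
    rw [hBaddl]
    exact RingHom.map_add σK _ _
  have hBsmull' : ∀ c x y, BK' (c • x) y = σK c * BK' x y := by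
    intro c x y
    show σK (BK y (c • x)) = σK c * σK (BK y x)
    rw [hBsmulr]
    exact RingHom.map_mul σK _ _
  have hBsmulr' : ∀ c x y, BK' x (c • y) = c * BK' x y := by
    intro c x y
    show σK (BK (c • y) x) = c * σK (BK y x)
    rw [hBsmull, RingHom.map_mul σK, hinv]
  have hRval' : ∀ x ∈ L, ∀ y ∈ L, BK' x y ∈
      Set.range (algebraMap (LaurentPolynomial ℤ) (FractionRing (LaurentPolynomial ℤ))) :=
    fun x hx y hy => (hRmem _).2 (hRval y hy x hx)
  have hLuni' : ∀ x, x ∈ Submodule.span (FractionRing (LaurentPolynomial ℤ)) (L : Set Vs) →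
      (∀ v ∈ L, BK' x v ∈ Set.range
        (algebraMap (LaurentPolynomial ℤ) (FractionRing (LaurentPolynomial ℤ)))) → x ∈ L := by
    intro x h1 h2
    exact huni' x h1 (fun v hv => (hRmem _).1 (h2 v hv))
  have hnd₁' : ∀ x ∈ Submodule.span (FractionRing (LaurentPolynomial ℤ)) (L₂ : Set Vs),
      (∀ y ∈ Submodule.span (FractionRing (LaurentPolynomial ℤ)) (L₂ : Set Vs),
        BK' x y = 0) → x = 0 := by
    intro x hx h
    exact hnd₂r x hx (fun y hy => (hzero _).1 (h y hy))
  have hnd₂' : ∀ x ∈ Submodule.span (FractionRing (LaurentPolynomial ℤ)) (L₁ : Set Vs),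
      (∀ y ∈ Submodule.span (FractionRing (LaurentPolynomial ℤ)) (L₁ : Set Vs),
        BK' x y = 0) → x = 0 := by
    intro x hx h
    exact hnd₁r x hx (fun y hy => (hzero _).1 (h y hy))
  have hOrth₂' : (L₁ : Set Vs) = {x : Vs | x ∈ L ∧ ∀ v ∈ L₂, BK' v x = 0} := by
    rw [hOrth₁]
    ext x
    simp only [Set.mem_setOf_eq]
    exact and_congr Iff.rfl (forall₂_congr fun v hv => (hzero _).symm)
  have hOrth₁' : (L₂ : Set Vs) = {x : Vs | x ∈ L ∧ ∀ v ∈ L₁, BK' x v = 0} := by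
    rw [hOrth₂]
    ext x
    simp only [Set.mem_setOf_eq]
    exact and_congr Iff.rfl (forall₂_congr fun v hv => (hzero _).symm)
  obtain ⟨D₂, hD₂, hiso₂⟩ := key σK hinv hσR BK' hBaddl' hBaddr' hBsmull' hBsmulr' b L hL hRval'
    hLuni' L₂ L₁ h₂L h₁L hfree₁ hnd₁' hnd₂' hOrth₂' hOrth₁'
  have hD₂' : (D₂ : Set Vs) = {x : Vs |
      x ∈ Submodule.span (FractionRing (LaurentPolynomial ℤ)) (L₂ : Set Vs) ∧
      ∀ v ∈ L₂, BK x v ∈ Set.range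
        (algebraMap (LaurentPolynomial ℤ) (FractionRing (LaurentPolynomial ℤ)))} := by
    rw [hD₂]
    ext x
    simp only [Set.mem_setOf_eq]
    exact and_congr Iff.rfl (forall₂_congr fun v hv => hRmem _)
  rw [sup_comm L₂ L₁] at hiso₂
  obtain ⟨E₁⟩ := hiso₁
  obtain ⟨E₂⟩ := hiso₂
  exact ⟨D₁, D₂, hD₁, hD₂', ⟨E₁.trans E₂.symm⟩, ⟨E₁⟩⟩
end

section
/- Let Γ be a finite connected oriented simple graph with spanning tree T, fix a vertex v₀ ∈ V, and let D_q ∈ Mat_{V×E}(ℤ[q]) be the q-incidence matrix: D_q(v,e) = D(v,e) for e ∈ T and D_q(v,e) = q·D(v,e) for e ∉ T. For a subset J ⊆ E with |J| = |V| − 1, let D_J be the square submatrix of D_q with rows indexed by V∖{v₀} and columns indexed by J. If J is not a spanning tree of Γ (equivalently, the spanning subgraph (V,J) contains a cycle), then det D_J = 0. If J is a spanning tree of Γ, then det D_J = q^{|J∖T|} or det D_J = −q^{|J∖T|}. -/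
/-- The incidence matrix of an oriented simple graph. -/
def incMat {V : Type} [DecidableEq V] (G : SimpleGraph V)
    (head tail : G.edgeSet → V) : Matrix V G.edgeSet ℤ :=
  fun v e => if v = head e then 1 else if v = tail e then -1 else 0

/-- `head` and `tail` form an orientation of `G`. -/
def IsOrientation {V : Type} (G : SimpleGraph V) (head tail : G.edgeSet → V) : Prop :=
  ∀ e : G.edgeSet, (e : Sym2 V) = s(head e, tail e)

/-- `T` is a spanning tree of `G`. -/
def IsSpanningTree {V : Type} [Fintype V] (G : SimpleGraph V) (T : Set G.edgeSet) : Prop :=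
  (SimpleGraph.fromEdgeSet (Subtype.val '' T)).Connected ∧ T.ncard + 1 = Fintype.card V

section aux
variable {V : Type} [DecidableEq V] {G : SimpleGraph V} {head tail : G.edgeSet → V}

lemma head_ne_tail (hor : IsOrientation G head tail) (e : G.edgeSet) :
    head e ≠ tail e := by
  have h : (e : Sym2 V) ∈ G.edgeSet := e.prop
  rw [hor e, SimpleGraph.mem_edgeSet] at h
  exact h.ne

lemma incMat_eq (hor : IsOrientation G head tail) (v : V) (e : G.edgeSet) :
    incMat G head tail v e
      = (if v = head e then 1 else 0) - (if v = tail e then 1 else 0) := by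
  have hne := head_ne_tail hor e
  unfold incMat
  split_ifs with h1 h2 <;> simp_all

variable (head) in
/-- signed indicator of the edge `s(a,b)` among edges in `J`. -/
def stepVec (J : Set G.edgeSet) (a b : V) : {e : G.edgeSet // e ∈ J} → ℤ :=
  fun f => if (f.val : Sym2 V) = s(a, b) then (if head f.val = b then 1 else -1) else 0

variable (head) in
/-- signed edge indicator vector of a walk. -/
def chiVec {J : Set G.edgeSet} {a b : V}
    (w : (SimpleGraph.fromEdgeSet (Subtype.val '' J)).Walk a b) :
    {e : G.edgeSet // e ∈ J} → ℤ :=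
  (w.darts.map fun d => stepVec head J d.toProd.1 d.toProd.2).sum

variable {J : Set G.edgeSet} [Fintype {e : G.edgeSet // e ∈ J}]

lemma step_sum (hor : IsOrientation G head tail) {a b : V}
    (hadj : (SimpleGraph.fromEdgeSet (Subtype.val '' J)).Adj a b) (u : V) :
    ∑ f : {e : G.edgeSet // e ∈ J}, incMat G head tail u f.val * stepVec head J a b f
      = (if u = b then 1 else 0) - (if u = a then 1 else 0) := by
  rw [SimpleGraph.fromEdgeSet_adj] at hadj
  obtain ⟨⟨e, he, hval⟩, hab⟩ := hadj
  set f₀ : {e : G.edgeSet // e ∈ J} := ⟨e, he⟩ with hf₀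
  rw [Finset.sum_eq_single f₀]
  · have hcond : (f₀.val : Sym2 V) = s(a, b) := hval
    rw [stepVec, if_pos hcond]
    have hht : s(head f₀.val, tail f₀.val) = s(a, b) := by rw [← hor f₀.val]; exact hcond
    rw [Sym2.eq_iff] at hht
    rcases hht with ⟨hh, ht⟩ | ⟨hh, ht⟩
    · rw [if_neg (by rw [hh]; exact hab), incMat_eq hor, hh, ht]; ring
    · rw [if_pos hh, incMat_eq hor, hh, ht]; ring
  · intro f _ hf
    rw [stepVec, if_neg, mul_zero]
    intro hc
    exact hf (Subtype.ext (Subtype.ext (by rw [hc, ← hval])))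
  · intro h; exact absurd (Finset.mem_univ f₀) h

lemma chi_telescope (hor : IsOrientation G head tail) {a b : V}
    (w : (SimpleGraph.fromEdgeSet (Subtype.val '' J)).Walk a b) (u : V) :
    ∑ f : {e : G.edgeSet // e ∈ J}, incMat G head tail u f.val * chiVec head w f
      = (if u = b then 1 else 0) - (if u = a then 1 else 0) := by
  induction w with
  | nil => simp [chiVec]
  | @cons a c b h p ih =>
      have hch : chiVec head (SimpleGraph.Walk.cons h p)
          = stepVec head J a c + chiVec head p := by
        simp [chiVec, SimpleGraph.Walk.darts_cons]
      simp only [hch, Pi.add_apply, mul_add, Finset.sum_add_distrib, ih, step_sum hor h u]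
      ring

end aux

open scoped Classical in
/-- Let `Γ` be a finite connected oriented simple graph with spanning
tree `T`, `v₀` a vertex, and `D_q` the q-incidence matrix over `ℤ[q]`.  For `J ⊆ E` with
`|J| = |V| − 1`, let `D_J` be the square submatrix of `D_q` with rows `V∖{v₀}` and
columns `J`.  If `J` is not a spanning tree then `det D_J = 0`; if `J` is a spanning
tree then `det D_J = ±q^{|J∖T|}`. -/
theorem stmt16 (V : Type) [Fintype V] [DecidableEq V] (G : SimpleGraph V)
    [Fintype G.edgeSet]
    (head tail : G.edgeSet → V) (hor : IsOrientation G head tail)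
    (hconn : G.Connected)
    (T : Set G.edgeSet) (hT : IsSpanningTree G T)
    (v₀ : V)
    (J : Set G.edgeSet) (hJ : J.ncard + 1 = Fintype.card V) :
    let Dq : Matrix V G.edgeSet (Polynomial ℤ) := fun v e =>
      if e ∈ T then ((incMat G head tail v e : ℤ) : Polynomial ℤ)
      else Polynomial.X * ((incMat G head tail v e : ℤ) : Polynomial ℤ)
    (¬ IsSpanningTree G J →
      ∀ idx : {v : V // v ≠ v₀} ≃ {e : G.edgeSet // e ∈ J},
        (Matrix.of fun u w : {v : V // v ≠ v₀} => Dq u.val (idx w).val).det = 0) ∧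
    (IsSpanningTree G J →
      ∀ idx : {v : V // v ≠ v₀} ≃ {e : G.edgeSet // e ∈ J},
        (Matrix.of fun u w : {v : V // v ≠ v₀} => Dq u.val (idx w).val).det
            = Polynomial.X ^ (J \ T).ncard ∨
        (Matrix.of fun u w : {v : V // v ≠ v₀} => Dq u.val (idx w).val).det
            = -Polynomial.X ^ (J \ T).ncard) := by
  intro Dq
  have hDq : Dq = fun v e =>
      if e ∈ T then ((incMat G head tail v e : ℤ) : Polynomial ℤ)
      else Polynomial.X * ((incMat G head tail v e : ℤ) : Polynomial ℤ) := rfl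
  set H := SimpleGraph.fromEdgeSet (Subtype.val '' J) with hH
  constructor
  · -- not a spanning tree : det = 0
    intro hns idx
    have hnc : ¬ H.Connected := fun hc => hns ⟨hc, hJ⟩
    have hnp : ¬ H.Preconnected := fun hp => hnc (by haveI : Nonempty V := ⟨v₀⟩; exact ⟨hp⟩)
    rw [SimpleGraph.Preconnected] at hnp; push_neg at hnp
    obtain ⟨a, b, hab⟩ := hnp
    have hu : ∃ u : V, ¬ H.Reachable v₀ u := by
      by_contra h; push_neg at h
      exact hab ((h a).symm.trans (h b))
    obtain ⟨u₀, hu₀⟩ := hu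
    set S : Set V := {v | H.Reachable u₀ v} with hS
    have hv₀S : v₀ ∉ S := fun h => hu₀ h.symm
    have hu₀v₀ : u₀ ≠ v₀ := fun h => hu₀ (h ▸ SimpleGraph.Reachable.refl u₀)
    set c : {v : V // v ≠ v₀} → Polynomial ℤ :=
      fun u => if (u : V) ∈ S then 1 else 0 with hc
    apply Matrix.exists_vecMul_eq_zero_iff.mp
    refine ⟨c, ?_, ?_⟩
    · intro h0
      have h1 : c ⟨u₀, hu₀v₀⟩ = 0 := by rw [h0]; rfl
      rw [hc] at h1
      simp only [if_pos (show u₀ ∈ S from SimpleGraph.Reachable.refl u₀)] at h1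
      exact one_ne_zero h1
    · funext w
      set e : G.edgeSet := (idx w).val with he
      have heJ : e ∈ J := (idx w).prop
      have hadj : H.Adj (head e) (tail e) := by
        rw [hH, SimpleGraph.fromEdgeSet_adj]
        exact ⟨⟨e, heJ, (hor e)⟩, head_ne_tail hor e⟩
      have hhts : (head e ∈ S) ↔ (tail e ∈ S) :=
        ⟨fun h => h.trans hadj.reachable, fun h => h.trans hadj.symm.reachable⟩
      have hz : ∑ v : V, (if v ∈ S then (1:ℤ) else 0) * incMat G head tail v e = 0 := by
        have h1 : ∀ (a : V),
            ∑ v : V, (if v ∈ S then (1:ℤ) else 0) * (if v = a then 1 else 0)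
              = (if a ∈ S then 1 else 0) := by
          intro a
          rw [Finset.sum_eq_single a]
          · simp
          · intro v _ hv; rw [if_neg hv, mul_zero]
          · simp
        simp only [incMat_eq hor, mul_sub]
        rw [Finset.sum_sub_distrib, h1, h1]
        by_cases h : head e ∈ S
        · rw [if_pos h, if_pos (hhts.mp h), sub_self]
        · rw [if_neg h, if_neg (fun ht => h (hhts.mpr ht)), sub_self]
      show (Matrix.vecMul c (Matrix.of fun u w : {v : V // v ≠ v₀} => Dq u.val (idx w).val)) w = 0
      have key : ∀ v : V, (if v ∈ S then (1:Polynomial ℤ) else 0) * Dq v e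
          = (if e ∈ T then 1 else Polynomial.X) *
              (((if v ∈ S then (1:ℤ) else 0) * incMat G head tail v e : ℤ) : Polynomial ℤ) := by
        intro v
        rw [hDq]
        by_cases hv : v ∈ S <;> by_cases hT' : e ∈ T <;>
          simp [hv, hT'] <;> ring
      calc (Matrix.vecMul c (Matrix.of fun u w : {v : V // v ≠ v₀} => Dq u.val (idx w).val)) w
          = ∑ u : {v : V // v ≠ v₀}, c u * Dq u.val e := by
            simp [Matrix.vecMul, dotProduct, he]
        _ = ∑ v ∈ Finset.univ.erase v₀, (if v ∈ S then (1:Polynomial ℤ) else 0) * Dq v e := by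
            exact (Finset.sum_subtype (Finset.univ.erase v₀)
              (fun x => by simp [Finset.mem_erase])
              (fun v => (if v ∈ S then (1:Polynomial ℤ) else 0) * Dq v e)).symm
        _ = ∑ v : V, (if v ∈ S then (1:Polynomial ℤ) else 0) * Dq v e := by
            apply Finset.sum_erase
            rw [if_neg hv₀S, zero_mul]
        _ = (if e ∈ T then 1 else Polynomial.X) *
              ((∑ v : V, (if v ∈ S then (1:ℤ) else 0) * incMat G head tail v e : ℤ) : Polynomial ℤ) := by
            simp only [key]
            push_cast
            rw [Finset.mul_sum]
        _ = 0 := by rw [hz]; simp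
  · -- spanning tree : det = ± X^(J\T).ncard
    intro hst idx
    have hcH : H.Connected := hst.1
    have hwalk : ∀ u : V, H.Walk v₀ u := fun u => Classical.choice (hcH.preconnected v₀ u)
    set B : Matrix {v : V // v ≠ v₀} {v : V // v ≠ v₀} ℤ :=
      Matrix.of (fun u w => incMat G head tail u.val (idx w).val) with hB
    set C : Matrix {v : V // v ≠ v₀} {v : V // v ≠ v₀} ℤ :=
      Matrix.of (fun w u => chiVec head (hwalk u.val) (idx w)) with hCm
    have hBC : B * C = 1 := by
      ext u v
      rw [Matrix.mul_apply]
      simp only [hB, hCm, Matrix.of_apply]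
      rw [show (∑ w : {v : V // v ≠ v₀},
            incMat G head tail u.val (idx w).val * chiVec head (hwalk v.val) (idx w))
          = ∑ f : {e : G.edgeSet // e ∈ J},
            incMat G head tail u.val f.val * chiVec head (hwalk v.val) f from
        Equiv.sum_comp idx (fun f => incMat G head tail u.val f.val * chiVec head (hwalk v.val) f)]
      rw [chi_telescope hor, if_neg u.prop, sub_zero, Matrix.one_apply]
      by_cases h : u = v
      · rw [if_pos h, if_pos (by rw [h])]
      · rw [if_neg h, if_neg (fun hh => h (Subtype.ext hh))]
    have hdetB : B.det = 1 ∨ B.det = -1 := by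
      have h : B.det * C.det = 1 := by rw [← Matrix.det_mul, hBC, Matrix.det_one]
      exact Int.isUnit_iff.mp (IsUnit.of_mul_eq_one _ h)
    set cT : {v : V // v ≠ v₀} → Polynomial ℤ :=
      fun w => if ((idx w) : G.edgeSet) ∈ T then 1 else Polynomial.X with hcT
    have hM : (Matrix.of fun u w : {v : V // v ≠ v₀} => Dq u.val (idx w).val)
        = Matrix.of (fun u w => cT w * (B.map (Int.castRingHom (Polynomial ℤ))) u w) := by
      ext u w
      simp only [Matrix.of_apply, Matrix.map_apply, hDq, hcT, hB]
      by_cases h : (idx w).val ∈ T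
      · rw [if_pos h, if_pos h, one_mul]; rfl
      · rw [if_neg h, if_neg h]; rfl
    have hprod : (∏ w : {v : V // v ≠ v₀}, cT w) = Polynomial.X ^ (J \ T).ncard := by
      rw [show (∏ w : {v : V // v ≠ v₀}, cT w)
          = ∏ f : {e : G.edgeSet // e ∈ J},
              (if (f : G.edgeSet) ∈ T then 1 else Polynomial.X) from
        Equiv.prod_comp idx (fun f => if (f : G.edgeSet) ∈ T then 1 else Polynomial.X)]
      rw [Finset.prod_ite, Finset.prod_const_one, Finset.prod_const, one_mul]
      congr 1
      rw [← Fintype.card_subtype]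
      have hcard : (J \ T).ncard = Fintype.card ↥(J \ T) := by
        rw [← Nat.card_coe_set_eq, Nat.card_eq_fintype_card]
      rw [hcard]
      exact Fintype.card_congr
        ⟨fun x => ⟨x.1.1, x.1.2, x.2⟩, fun y => ⟨⟨y.1, y.2.1⟩, y.2.2⟩,
          fun x => rfl, fun y => rfl⟩
    have hdet2 : (B.map (Int.castRingHom (Polynomial ℤ))).det
        = ((B.det : ℤ) : Polynomial ℤ) := by
      simpa using (RingHom.map_det (Int.castRingHom (Polynomial ℤ)) B).symm
    rw [hM, Matrix.det_mul_row, hprod, hdet2]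
    rcases hdetB with h | h
    · left; rw [h, Int.cast_one, mul_one]
    · right; rw [h]; push_cast; ring
end
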